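/- arXiv:1005.2560 — 2 statements merged into one kernel-verified Lean document; each statement's English description precedes it below -/
import Mathlib

section
/- There exists a constant C > 0 such that for all n ≥ 2, λ₁^{(2)}(Cay(G_n, S)) ≤ C · (log n) / n², where G_n = ℤ₂ ≀ ℤ_n is the lamplighter group with generating set S. -/
noncomputable section

/-- The underlying set of the lamplighter group `ℤ₂ ≀ ℤ_n`. -/
abbrev Lamplighter (n : ℕ) := (ZMod n → ZMod 2) × ZMod n

/-- Multiplication in the lamplighter group `ℤ₂ ≀ ℤ_n = (⊕ ℤ₂) ⋊ ℤ_n`, where `k ∈ ℤ_n`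
acts on configurations by `(k·f)(i) = f(i − k)`. -/
def llMul (n : ℕ) (x y : Lamplighter n) : Lamplighter n :=
  (fun i => x.1 i + y.1 (i - x.2), x.2 + y.2)

/-- Inversion in the lamplighter group `ℤ₂ ≀ ℤ_n`. -/
def llInv (n : ℕ) (x : Lamplighter n) : Lamplighter n :=
  (fun i => -x.1 (i + x.2), -x.2)

/-- The generator `(δ₀, 0)`: the lamp at position `0` is lit, no shift. -/
def llGenA (n : ℕ) : Lamplighter n :=
  (fun i => if i = 0 then 1 else 0, 0)

/-- The generator `(0, 1)`: no lamps lit, shift by `1`. -/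
def llGenB (n : ℕ) : Lamplighter n := (fun _ => 0, 1)

/-- The symmetrized generating set `S ∪ S⁻¹` of the lamplighter group. -/
def llGens (n : ℕ) : List (Lamplighter n) :=
  [llGenA n, llGenB n, llInv n (llGenA n), llInv n (llGenB n)]

/-- The Cayley graph of the lamplighter group `ℤ₂ ≀ ℤ_n` with respect to
`S = {(δ₀,0), (0,1)}`: distinct `x, y` are adjacent iff `y = s·x` for some `s ∈ S ∪ S⁻¹`
(the relation is symmetrized, which changes nothing as `S ∪ S⁻¹` is closed under inverses). -/
def llGraph (n : ℕ) : SimpleGraph (Lamplighter n) where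
  Adj x y := x ≠ y ∧ ∃ s ∈ llGens n, y = llMul n s x ∨ x = llMul n s y
  symm := ⟨by
    rintro x y ⟨h1, s, hs, h2⟩
    exact ⟨h1.symm, s, hs, h2.symm⟩⟩
  loopless := ⟨fun x h => h.1 rfl⟩

/-- The first positive eigenvalue `λ₁^{(p)}` of the discrete `p`-Laplacian of the finite graph
with edge multiplicities `ω`, defined via the variational characterization (3). -/
def lambdaOne {V : Type*} [Fintype V] (ω : V → V → ℕ) (p : ℝ) : ℝ :=
  sInf {r : ℝ | ∃ f : V → ℝ, (¬ ∀ x y : V, f x = f y) ∧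
    r = (∑ x : V, ∑ y : V, |f x - f y| ^ p * (ω x y : ℝ)) /
        (⨅ α : ℝ, ∑ x : V, |f x - α| ^ p)}

/-- Edge multiplicities of the Cayley graph of the lamplighter group:
`ω(x,y) = #{s ∈ S ∪ S⁻¹ : y = s·x}`. -/
def llOmega (n : ℕ) (x y : Lamplighter n) : ℕ :=
  haveI : DecidablePred (fun s : Lamplighter n => y = llMul n s x) :=
    fun _ => Classical.dec _
  ((llGens n).filter (fun s => y = llMul n s x)).length

/- ========================= auxiliary material ========================= -/

lemma key2 {V : Type*} [Fintype V] (h : V → ℝ) (t : V → V) (L : List V)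
    [inst : ∀ y : V, DecidablePred (fun s : V => y = t s)] :
    ∑ y : V, h y * (((L.filter (fun s => y = t s)).length : ℕ) : ℝ)
      = (L.map (fun s => h (t s))).sum := by
  classical
  induction L with
  | nil => simp
  | cons a L ih =>
      simp only [List.filter_cons, List.map_cons, List.sum_cons]
      rw [← ih]
      have : ∀ y : V,
          h y * (((if decide (y = t a) = true then a :: L.filter (fun s => decide (y = t s))
              else L.filter (fun s => decide (y = t s))).length : ℕ) : ℝ)
          = (if y = t a then h y else 0)
            + h y * ((L.filter (fun s => decide (y = t s))).length : ℝ) := by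
        intro y
        by_cases hy : y = t a <;> simp [hy] <;> ring
      rw [Finset.sum_congr rfl (fun y _ => this y), Finset.sum_add_distrib]
      have h2 : (∑ x : V, if x = t a then h x else 0) = h (t a) := by
        rw [Finset.sum_eq_single (t a)] <;> simp +contextual
      rw [h2]

/-- The test function on `ZMod n`: distance to `0` on the cycle. -/
def llg (n : ℕ) (k : ZMod n) : ℝ := ((min (ZMod.val k) (n - ZMod.val k) : ℕ) : ℝ)

/-- The test function on the lamplighter group. -/
def llf (n : ℕ) (x : Lamplighter n) : ℝ := llg n x.2

lemma rpow_two_abs (t : ℝ) : |t| ^ (2:ℝ) = t ^ 2 := by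
  rw [show (2:ℝ) = ((2:ℕ):ℝ) by norm_num, Real.rpow_natCast, sq_abs]

lemma llg_step (n : ℕ) [NeZero n] (hn : 2 ≤ n) (k : ZMod n) :
    |llg n (1 + k) - llg n k| ≤ 1 := by
  have hv : k.val < n := ZMod.val_lt k
  have hval : (1 + k).val = (1 + k.val) % n := by
    rw [ZMod.val_add]
    congr 1
    rw [ZMod.val_one'']
    omega
  have hva : (1 + k).val = if 1 + k.val = n then 0 else 1 + k.val := by
    rw [hval]
    rcases eq_or_ne (1 + k.val) n with h | h
    · simp [h]
    · rw [if_neg h]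
      exact Nat.mod_eq_of_lt (by omega)
  have hb : min ((1+k).val) (n - (1+k).val) ≤ min k.val (n - k.val) + 1 ∧
            min k.val (n - k.val) ≤ min ((1+k).val) (n - (1+k).val) + 1 := by
    split at hva <;> omega
  have h1' := (Nat.cast_le (α := ℝ)).2 hb.1
  have h2' := (Nat.cast_le (α := ℝ)).2 hb.2
  unfold llg
  rw [abs_le]
  push_cast at h1' h2' ⊢
  constructor <;> linarith

lemma pair_bound (a b α : ℝ) : (b - a)^2/2 ≤ (a - α)^2 + (b - α)^2 := by
  nlinarith [sq_nonneg (a + b - 2*α)]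

lemma num_bound (n : ℕ) [NeZero n] (hn : 2 ≤ n) (x : Lamplighter n) :
    ∑ y : Lamplighter n, |llf n x - llf n y| ^ (2:ℝ) * (llOmega n x y : ℝ) ≤ 2 := by
  classical
  simp only [llOmega]
  rw [key2 (fun y => |llf n x - llf n y| ^ (2:ℝ)) (fun s => llMul n s x) (llGens n)
    (inst := fun _ _ => Classical.dec _)]
  have hA : llf n (llMul n (llGenA n) x) = llf n x := by
    simp [llf, llMul, llGenA]
  have hA' : llf n (llMul n (llInv n (llGenA n)) x) = llf n x := by
    simp [llf, llMul, llInv, llGenA]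
  have hB : llf n (llMul n (llGenB n) x) = llg n (1 + x.2) := by
    simp [llf, llMul, llGenB]
  have hB' : llf n (llMul n (llInv n (llGenB n)) x) = llg n (-1 + x.2) := by
    simp [llf, llMul, llInv, llGenB]
  simp only [llGens, List.map_cons, List.map_nil, List.sum_cons, List.sum_nil, add_zero,
    hA, hA', hB, hB', sub_self, abs_zero]
  have hz : (0:ℝ) ^ (2:ℝ) = 0 := by
    rw [Real.zero_rpow] ; norm_num
  have hstep1 : |llf n x - llg n (1 + x.2)| ^ (2:ℝ) ≤ 1 := by
    rw [rpow_two_abs, ← sq_abs]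
    have h := llg_step n hn x.2
    rw [abs_sub_comm] at h
    have h' : |llf n x - llg n (1 + x.2)| ≤ 1 := by
      rw [show llf n x = llg n x.2 from rfl]
      exact h
    nlinarith [abs_nonneg (llf n x - llg n (1 + x.2))]
  have hstep2 : |llf n x - llg n (-1 + x.2)| ^ (2:ℝ) ≤ 1 := by
    rw [rpow_two_abs, ← sq_abs]
    have h := llg_step n hn (-1 + x.2)
    have he : 1 + (-1 + x.2) = x.2 := by ring
    rw [he] at h
    have h' : |llf n x - llg n (-1 + x.2)| ≤ 1 := by
      rw [show llf n x = llg n x.2 from rfl]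
      exact h
    nlinarith [abs_nonneg (llf n x - llg n (-1 + x.2))]
  rw [hz]
  linarith

lemma cycle_bound (n : ℕ) [NeZero n] (hn : 2 ≤ n) (α : ℝ) :
    (n:ℝ)^3/1024 ≤ ∑ k : ZMod n, (llg n k - α)^2 := by
  classical
  set q : ℕ := n/8 + 1 with hq
  set m : ℕ := n/2 with hm
  have hqn : ∀ j ∈ Finset.range q, j < n := by
    intro j hj
    simp only [Finset.mem_range] at hj
    omega
  have hjmn : ∀ j ∈ Finset.range q, j + m < n := by
    intro j hj
    simp only [Finset.mem_range] at hj
    omega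
  set s₁ : Finset (ZMod n) := (Finset.range q).image (fun j : ℕ => (j : ZMod n)) with hs₁
  set s₂ : Finset (ZMod n) := (Finset.range q).image (fun j : ℕ => ((j + m : ℕ) : ZMod n)) with hs₂
  have hval1 : ∀ j ∈ Finset.range q, ((j : ZMod n)).val = j :=
    fun j hj => ZMod.val_cast_of_lt (hqn j hj)
  have hval2 : ∀ j ∈ Finset.range q, (((j + m : ℕ) : ZMod n)).val = j + m :=
    fun j hj => ZMod.val_cast_of_lt (hjmn j hj)
  have hdisj : Disjoint s₁ s₂ := by
    rw [Finset.disjoint_left]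
    rintro a ha₁ ha₂
    rw [hs₁, Finset.mem_image] at ha₁
    rw [hs₂, Finset.mem_image] at ha₂
    obtain ⟨j, hj, rfl⟩ := ha₁
    obtain ⟨j', hj', he⟩ := ha₂
    have h1 := hval1 j hj
    have h2 := hval2 j' hj'
    rw [he] at h2
    rw [h1] at h2
    simp only [Finset.mem_range] at hj hj'
    omega
  have hinj1 : ∀ a ∈ Finset.range q, ∀ b ∈ Finset.range q,
      (a : ZMod n) = (b : ZMod n) → a = b := by
    intro a ha b hb he
    have := hval1 a ha
    rw [he, hval1 b hb] at this
    omega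
  have hinj2 : ∀ a ∈ Finset.range q, ∀ b ∈ Finset.range q,
      ((a + m : ℕ) : ZMod n) = ((b + m : ℕ) : ZMod n) → a = b := by
    intro a ha b hb he
    have := hval2 a ha
    rw [he, hval2 b hb] at this
    omega
  have hsub : ∑ k ∈ s₁ ∪ s₂, (llg n k - α)^2 ≤ ∑ k : ZMod n, (llg n k - α)^2 :=
    Finset.sum_le_sum_of_subset_of_nonneg (Finset.subset_univ _)
      (fun _ _ _ => sq_nonneg _)
  rw [Finset.sum_union hdisj, Finset.sum_image hinj1, Finset.sum_image hinj2,
    ← Finset.sum_add_distrib] at hsub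
  have hterm : ∀ j ∈ Finset.range q,
      (n:ℝ)^2/128 ≤ (llg n ((j : ZMod n)) - α)^2 + (llg n (((j + m : ℕ) : ZMod n)) - α)^2 := by
    intro j hj
    have hjq : j < q := Finset.mem_range.mp hj
    have ha : llg n ((j : ZMod n)) = (j : ℝ) := by
      unfold llg
      rw [hval1 j hj]
      have : min j (n - j) = j := by omega
      rw [this]
    have hbv : llg n (((j + m : ℕ) : ZMod n)) = ((min (j + m) (n - (j + m)) : ℕ) : ℝ) := by
      unfold llg
      rw [hval2 j hj]
    have hgap : (n:ℝ)/8 ≤ llg n (((j + m : ℕ) : ZMod n)) - llg n ((j : ZMod n)) := by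
      rw [ha, hbv]
      have hnat : 8 * j + n ≤ 8 * min (j + m) (n - (j + m)) := by omega
      have := (Nat.cast_le (α := ℝ)).2 hnat
      push_cast at this ⊢
      linarith
    have hpair := pair_bound (llg n ((j : ZMod n))) (llg n (((j + m : ℕ) : ZMod n))) α
    have hsq : ((n:ℝ)/8)^2 ≤ (llg n (((j + m : ℕ) : ZMod n)) - llg n ((j : ZMod n)))^2 := by
      apply pow_le_pow_left₀ (by positivity) hgap
    have : ((n:ℝ)/8)^2 = (n:ℝ)^2/64 := by ring
    nlinarith
  have hsum2 : (q : ℝ) * ((n:ℝ)^2/128)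
      ≤ ∑ j ∈ Finset.range q, ((llg n ((j : ZMod n)) - α)^2 + (llg n (((j + m : ℕ) : ZMod n)) - α)^2) := by
    calc (q : ℝ) * ((n:ℝ)^2/128) = ∑ _j ∈ Finset.range q, (n:ℝ)^2/128 := by
          rw [Finset.sum_const, Finset.card_range, nsmul_eq_mul]
      _ ≤ _ := Finset.sum_le_sum hterm
  have hqge : (n:ℝ)/8 ≤ (q : ℝ) := by
    have h8 : n ≤ 8 * q := by omega
    have h8' : (n:ℝ) ≤ 8 * (q:ℝ) := by exact_mod_cast h8
    linarith
  have hn2 : (0:ℝ) ≤ (n:ℝ)^2/128 := by positivity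
  nlinarith [hsub, hsum2, mul_le_mul_of_nonneg_right hqge hn2]

lemma den_bound (n : ℕ) [NeZero n] (hn : 2 ≤ n) (α : ℝ) :
    (Fintype.card (ZMod n → ZMod 2) : ℝ) * ((n:ℝ)^3/1024)
      ≤ ∑ x : Lamplighter n, |llf n x - α| ^ (2:ℝ) := by
  classical
  have hsum : ∑ x : Lamplighter n, |llf n x - α| ^ (2:ℝ)
      = (Fintype.card (ZMod n → ZMod 2) : ℝ) * ∑ k : ZMod n, (llg n k - α)^2 := by
    rw [Fintype.sum_prod_type]
    simp only [llf, rpow_two_abs]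
    rw [Finset.sum_const, Finset.card_univ, nsmul_eq_mul]
  rw [hsum]
  exact mul_le_mul_of_nonneg_left (cycle_bound n hn α) (Nat.cast_nonneg _)

/-- Proposition 8: there is `C > 0` with
`λ₁^{(2)}(Cay(ℤ₂ ≀ ℤ_n, S)) ≤ C·(log n)/n²` for all `n ≥ 2`. -/
theorem statement_10 :
    ∃ C : ℝ, 0 < C ∧ ∀ (n : ℕ) [NeZero n], 2 ≤ n →
      lambdaOne (llOmega n) 2 ≤ C * Real.log n / (n : ℝ) ^ 2 := by
  refine ⟨2048 / Real.log 2, div_pos (by norm_num) (Real.log_pos one_lt_two), ?_⟩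
  intro n _ hn
  classical
  have hnpos : (0:ℝ) < n := by exact_mod_cast (by omega : 0 < n)
  have hnc : ¬ ∀ x y : Lamplighter n, llf n x = llf n y := by
    intro hc
    have h0 := hc ((fun _ => 0), (0 : ZMod n)) ((fun _ => 0), (1 : ZMod n))
    have e0 : llf n ((fun _ => 0), (0 : ZMod n)) = 0 := by
      unfold llf llg
      rw [ZMod.val_zero]
      simp
    have e1 : llf n ((fun _ => 0), (1 : ZMod n)) = 1 := by
      have hv1 : (1 : ZMod n).val = 1 := by rw [ZMod.val_one'']; omega
      unfold llf llg
      rw [hv1, show min 1 (n-1) = 1 by omega]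
      norm_num
    rw [e0, e1] at h0
    norm_num at h0
  set Num := ∑ x : Lamplighter n, ∑ y : Lamplighter n,
      |llf n x - llf n y| ^ (2:ℝ) * (llOmega n x y : ℝ) with hNumdef
  set Den := ⨅ α : ℝ, ∑ x : Lamplighter n, |llf n x - α| ^ (2:ℝ) with hDendef
  have hle : lambdaOne (llOmega n) 2 ≤ Num / Den := by
    apply csInf_le
    · refine ⟨0, ?_⟩
      rintro r ⟨g, hg, rfl⟩
      apply div_nonneg
      · exact Finset.sum_nonneg fun x _ => Finset.sum_nonneg fun y _ =>
          mul_nonneg (Real.rpow_nonneg (abs_nonneg _) _) (Nat.cast_nonneg _)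
      · exact le_ciInf fun β => Finset.sum_nonneg fun x _ =>
          Real.rpow_nonneg (abs_nonneg _) _
    · exact ⟨llf n, hnc, rfl⟩
  have hNum : Num ≤ 2 * (Fintype.card (Lamplighter n) : ℝ) := by
    calc Num ≤ ∑ _x : Lamplighter n, (2:ℝ) :=
          Finset.sum_le_sum fun x _ => num_bound n hn x
      _ = (Fintype.card (Lamplighter n) : ℝ) * 2 := by
          rw [Finset.sum_const, Finset.card_univ, nsmul_eq_mul]
      _ = 2 * (Fintype.card (Lamplighter n) : ℝ) := by ring
  set D : ℝ := (Fintype.card (ZMod n → ZMod 2) : ℝ) * ((n:ℝ)^3/1024) with hD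
  have hcardF : (0:ℝ) < (Fintype.card (ZMod n → ZMod 2) : ℝ) := by
    exact_mod_cast (Fintype.card_pos : 0 < Fintype.card (ZMod n → ZMod 2))
  have hDpos : 0 < D := mul_pos hcardF (div_pos (pow_pos hnpos 3) (by norm_num))
  have hDen : D ≤ Den := le_ciInf fun α => den_bound n hn α
  have hfrac : Num / Den ≤ (2 * (Fintype.card (Lamplighter n) : ℝ)) / D :=
    div_le_div₀ (by positivity) hNum hDpos hDen
  have hcard : (Fintype.card (Lamplighter n) : ℝ)
      = (Fintype.card (ZMod n → ZMod 2) : ℝ) * n := by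
    rw [show Fintype.card (Lamplighter n)
        = Fintype.card (ZMod n → ZMod 2) * Fintype.card (ZMod n) from
      Fintype.card_prod _ _, ZMod.card n]
    push_cast
    ring
  have hF0 : (Fintype.card (ZMod n → ZMod 2) : ℝ) ≠ 0 := ne_of_gt hcardF
  have hn0 : (n:ℝ) ≠ 0 := ne_of_gt hnpos
  have hval : (2 * (Fintype.card (Lamplighter n) : ℝ)) / D = 2048 / (n:ℝ)^2 := by
    rw [hcard, hD]
    field_simp
    ring
  have hl2 : 0 < Real.log 2 := Real.log_pos one_lt_two
  have hln : Real.log 2 ≤ Real.log n := by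
    apply Real.log_le_log (by norm_num)
    exact_mod_cast hn
  have hlog : 2048 / (n:ℝ)^2 ≤ 2048 / Real.log 2 * Real.log n / (n:ℝ)^2 := by
    have hcan : (2048:ℝ) / Real.log 2 * Real.log 2 = 2048 :=
      div_mul_cancel₀ _ (ne_of_gt hl2)
    calc (2048:ℝ)/(n:ℝ)^2 = 2048 / Real.log 2 * Real.log 2 / (n:ℝ)^2 := by rw [hcan]
      _ ≤ 2048 / Real.log 2 * Real.log n / (n:ℝ)^2 := by gcongr
  calc lambdaOne (llOmega n) 2 ≤ Num / Den := hle
    _ ≤ (2 * (Fintype.card (Lamplighter n) : ℝ)) / D := hfrac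
    _ = 2048 / (n:ℝ)^2 := hval
    _ ≤ 2048 / Real.log 2 * Real.log n / (n:ℝ)^2 := hlog
end
end

section
/- For every 1 ≤ p < ∞ there exists a constant C > 0 such that for all n ≥ 1 the level-n Hanoi Schreier graph Γ_n satisfies λ₁^{(p)}(Γ_n) ≤ C · 2^{−np}. -/
noncomputable section

/-- The generator `a_{(ij)}` of the Hanoi Towers group acting on finite ternary words:
`a_{(ij)}(iw) = jw`, `a_{(ij)}(jw) = iw`, and `a_{(ij)}(kw) = k·a_{(ij)}(w)` for
`k ∉ {i,j}`. -/
def hanoiMove (i j : Fin 3) : List (Fin 3) → List (Fin 3)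
  | [] => []
  | x :: w => if x = i then j :: w else if x = j then i :: w else x :: hanoiMove i j w

/-- The level-`n` Hanoi Schreier graph `Γ_n`: vertices are ternary words of length `n`, and
distinct `x, y` are adjacent iff `y ∈ {a(x), b(x), c(x)}` with `a = a_{(01)}`, `b = a_{(02)}`,
`c = a_{(12)}` (the relation is symmetrized; since the generators are involutions this is the
same relation). -/
def hanoiGraph (n : ℕ) : SimpleGraph (List.Vector (Fin 3) n) where
  Adj x y := x ≠ y ∧ ∃ s ∈ [hanoiMove 0 1, hanoiMove 0 2, hanoiMove 1 2],
    s x.toList = y.toList ∨ s y.toList = x.toList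
  symm := ⟨by
    rintro x y ⟨h1, s, hs, h2⟩
    exact ⟨h1.symm, s, hs, h2.symm⟩⟩
  loopless := ⟨fun x h => h.1 rfl⟩

/-- Edge multiplicities of the level-`n` Hanoi Schreier graph:
`ω(x,y) = #{s ∈ {a,b,c} : s(x) = y}`. -/
def hanoiOmega (n : ℕ) (x y : List.Vector (Fin 3) n) : ℕ :=
  (([hanoiMove 0 1, hanoiMove 0 2, hanoiMove 1 2].filter
    (fun s => s x.toList = y.toList))).length

def third (i j : Fin 3) : Fin 3 :=
  if 0 ≠ i ∧ 0 ≠ j then 0 else if 1 ≠ i ∧ 1 ≠ j then 1 else 2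

def psi (t : Fin 3) : List (Fin 3) → ℕ
  | [] => 0
  | x :: r => if x = t then psi t r else 2 ^ r.length + psi (third x t) r

def phi (t : Fin 3) (w : List (Fin 3)) : ℕ := psi t w.reverse

lemma third_ne : ∀ i j : Fin 3, i ≠ j → third i j ≠ i ∧ third i j ≠ j := by decide

lemma eq_third : ∀ i j y : Fin 3, i ≠ j → y ≠ i → y ≠ j → y = third i j := by decide

lemma third_ne_left : ∀ k t : Fin 3, k ≠ t → third k t ≠ k := by decide

lemma third_comm : ∀ i j : Fin 3, third i j = third j i := by decide

lemma third_third : ∀ i j : Fin 3, i ≠ j → third i (third i j) = j := by decide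

lemma third_third' : ∀ i j : Fin 3, i ≠ j → third j (third i j) = i := by decide

lemma fin3_cases : ∀ i j t : Fin 3, i ≠ j → t = i ∨ t = j ∨ t = third i j := by decide

lemma phi_nil (t : Fin 3) : phi t [] = 0 := rfl

lemma phi_append (t x : Fin 3) (w : List (Fin 3)) :
    phi t (w ++ [x]) = if x = t then phi t w else 2 ^ w.length + phi (third x t) w := by
  simp [phi, psi]

lemma phi_const (k t : Fin 3) (w : List (Fin 3)) (hw : ∀ y ∈ w, y = k) :
    phi t w = if k = t then 0 else 2 ^ w.length - 1 := by
  induction w using List.reverseRecOn generalizing t with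
  | nil => simp [phi_nil]
  | append_singleton w y ih =>
    have hy : y = k := hw y (by simp)
    subst hy
    have hw' : ∀ z ∈ w, z = y := fun z hz => hw z (by simp [hz])
    rw [phi_append]
    by_cases hkt : y = t
    · simp [hkt, ih t hw']
    · have h1 : third y t ≠ y := third_ne_left y t hkt
      rw [ih (third y t) hw']
      have h2 : (1:ℕ) ≤ 2 ^ w.length := Nat.one_le_two_pow
      simp [hkt, Ne.symm h1]
      omega

lemma phi_lt (t : Fin 3) (w : List (Fin 3)) : phi t w < 2 ^ w.length := by
  induction w using List.reverseRecOn generalizing t with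
  | nil => simp [phi_nil]
  | append_singleton w y ih =>
    rw [phi_append]
    have h2 : (0:ℕ) < 2 ^ w.length := by positivity
    by_cases hyt : y = t
    · simp only [hyt, if_true]
      calc phi t w < 2 ^ w.length := ih t
        _ ≤ 2 ^ (w ++ [t]).length := Nat.pow_le_pow_right (by norm_num) (by simp)
    · simp only [hyt, if_false]
      have := ih (third y t)
      simp [List.length_append, pow_succ]
      omega

def swap3 (i j x : Fin 3) : Fin 3 := if x = i then j else if x = j then i else x

lemma move_length (i j : Fin 3) (w : List (Fin 3)) :
    (hanoiMove i j w).length = w.length := by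
  induction w with
  | nil => rfl
  | cons y w ih =>
    simp only [hanoiMove]
    split_ifs <;> simp [ih]

lemma move_concat_free (i j x : Fin 3) (w : List (Fin 3))
    (hw : ∀ y ∈ w, y ≠ i ∧ y ≠ j) :
    hanoiMove i j (w ++ [x]) = w ++ [swap3 i j x] := by
  induction w with
  | nil =>
    simp only [List.nil_append, hanoiMove, swap3]
    split_ifs <;> rfl
  | cons y w ih =>
    have h := hw y (by simp)
    simp only [List.cons_append, hanoiMove, h.1, h.2, if_false, List.append_eq]
    rw [ih (fun z hz => hw z (by simp [hz]))]

lemma move_concat_hit (i j x : Fin 3) (w : List (Fin 3))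
    (hw : ∃ y ∈ w, y = i ∨ y = j) :
    hanoiMove i j (w ++ [x]) = hanoiMove i j w ++ [x] := by
  induction w with
  | nil => simp at hw
  | cons y w ih =>
    by_cases hyi : y = i
    · simp [hanoiMove, hyi]
    · by_cases hyj : y = j
      · subst hyj; simp [hanoiMove, if_neg hyi]
      · have hw' : ∃ z ∈ w, z = i ∨ z = j := by
          rcases hw with ⟨z, hz, hzo⟩
          rcases List.mem_cons.mp hz with rfl | hz'
          · rcases hzo with rfl | rfl
            · exact absurd rfl hyi
            · exact absurd rfl hyj
          · exact ⟨z, hz', hzo⟩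
        simp [hanoiMove, hyi, hyj, ih hw']

lemma lipB (i j : Fin 3) (hij : i ≠ j) (w : List (Fin 3))
    (hw : ∀ y ∈ w, y = third i j) (t : Fin 3) :
    phi t (w ++ [j]) ≤ phi t (w ++ [i]) + 1 ∧ phi t (w ++ [i]) ≤ phi t (w ++ [j]) + 1 := by
  set k := third i j with hk
  have hki : k ≠ i := (third_ne i j hij).1
  have hkj : k ≠ j := (third_ne i j hij).2
  have hphi : ∀ s, phi s w = if k = s then 0 else 2 ^ w.length - 1 :=
    fun s => phi_const k s w hw
  have h2 : (1:ℕ) ≤ 2 ^ w.length := Nat.one_le_two_pow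
  rcases fin3_cases i j t hij with rfl | rfl | htk
  · -- t = i
    rw [phi_append, phi_append, if_pos rfl, if_neg (Ne.symm hij)]
    rw [third_comm j t, ← hk, hphi t, hphi k]
    simp [Ne.symm hki, hki]
    omega
  · -- t = j
    rw [phi_append, phi_append, if_pos rfl, if_neg hij]
    rw [← hk, hphi t, hphi k]
    simp [Ne.symm hkj, hkj]
    omega
  · -- t = k
    subst htk
    rw [phi_append, phi_append, if_neg (Ne.symm hkj), if_neg (Ne.symm hki)]
    rw [third_third i j hij, third_third' i j hij, hphi i, hphi j]
    simp [hki, hkj]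

lemma lip (i j : Fin 3) (hij : i ≠ j) (u : List (Fin 3)) (t : Fin 3) :
    phi t (hanoiMove i j u) ≤ phi t u + 1 ∧ phi t u ≤ phi t (hanoiMove i j u) + 1 := by
  induction u using List.reverseRecOn generalizing t with
  | nil => exact ⟨Nat.le_succ 0, Nat.le_succ 0⟩
  | append_singleton w x ih =>
    by_cases hw : ∃ y ∈ w, y = i ∨ y = j
    · rw [move_concat_hit i j x w hw, phi_append, phi_append, move_length]
      by_cases hxt : x = t
      · simp only [hxt, if_pos rfl]
        exact ih t
      · simp only [hxt, if_false]
        have := ih (third x t)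
        omega
    · have hw' : ∀ y ∈ w, y ≠ i ∧ y ≠ j := by
        intro y hy
        constructor
        · exact fun h => hw ⟨y, hy, Or.inl h⟩
        · exact fun h => hw ⟨y, hy, Or.inr h⟩
      rw [move_concat_free i j x w hw']
      have hk : ∀ y ∈ w, y = third i j :=
        fun y hy => eq_third i j y hij (hw' y hy).1 (hw' y hy).2
      by_cases hxi : x = i
      · have hs : swap3 i j x = j := by simp [swap3, hxi]
        rw [hs, hxi]
        exact (lipB i j hij w hk t)
      · by_cases hxj : x = j
        · have hs : swap3 i j x = i := by simp [swap3, hxi, hxj]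
          rw [hs, hxj]
          exact (lipB i j hij w hk t).symm
        · have hs : swap3 i j x = x := by simp [swap3, hxi, hxj]
          rw [hs]
          omega


open Finset in
lemma sum_ite_toList {nn : ℕ} (l : List (Fin 3)) :
    ∑ y : List.Vector (Fin 3) nn, (if l = y.toList then (1:ℝ) else 0) ≤ 1 := by
  classical
  rw [Finset.sum_boole]
  have : (Finset.univ.filter (fun y : List.Vector (Fin 3) nn => l = y.toList)).card ≤ 1 := by
    apply Finset.card_le_one.mpr
    intro a ha b hb
    simp only [Finset.mem_filter] at ha hb
    exact List.Vector.toList_injective (ha.2.symm.trans hb.2)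
  exact_mod_cast this

lemma sum_omega (nn : ℕ) (x : List.Vector (Fin 3) nn) :
    ∑ y : List.Vector (Fin 3) nn, (hanoiOmega nn x y : ℝ) ≤ 3 := by
  classical
  have hsplit : ∀ y : List.Vector (Fin 3) nn, (hanoiOmega nn x y : ℝ) =
      (if hanoiMove 0 1 x.toList = y.toList then (1:ℝ) else 0) +
      (if hanoiMove 0 2 x.toList = y.toList then (1:ℝ) else 0) +
      (if hanoiMove 1 2 x.toList = y.toList then (1:ℝ) else 0) := by
    intro y
    simp only [hanoiOmega, List.filter]
    split_ifs <;> simp_all <;> norm_num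
  calc ∑ y : List.Vector (Fin 3) nn, (hanoiOmega nn x y : ℝ)
      = (∑ y : List.Vector (Fin 3) nn, (if hanoiMove 0 1 x.toList = y.toList then (1:ℝ) else 0)) +
        (∑ y : List.Vector (Fin 3) nn, (if hanoiMove 0 2 x.toList = y.toList then (1:ℝ) else 0)) +
        (∑ y : List.Vector (Fin 3) nn, (if hanoiMove 1 2 x.toList = y.toList then (1:ℝ) else 0)) := by
        rw [← Finset.sum_add_distrib, ← Finset.sum_add_distrib]
        exact Finset.sum_congr rfl (fun y _ => hsplit y)
    _ ≤ 1 + 1 + 1 := by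
        gcongr <;> exact sum_ite_toList _
    _ = 3 := by norm_num

lemma main_bound {p : ℝ} (hp : 1 ≤ p) (nn : ℕ) (f : List.Vector (Fin 3) nn → ℝ)
    (hnc : ¬ ∀ x y : List.Vector (Fin 3) nn, f x = f y)
    (hlip : ∀ x y : List.Vector (Fin 3) nn,
      (∃ s ∈ [hanoiMove 0 1, hanoiMove 0 2, hanoiMove 1 2], s x.toList = y.toList) →
      |f x - f y| ≤ 1)
    (D : ℝ) (hD : 0 < D)
    (hden : ∀ α : ℝ, D ≤ ∑ x : List.Vector (Fin 3) nn, |f x - α| ^ p) :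
    lambdaOne (hanoiOmega nn) p ≤ 3 ^ (nn + 1) / D := by
  classical
  have hbdd : BddBelow {r : ℝ | ∃ g : List.Vector (Fin 3) nn → ℝ,
      (¬ ∀ x y, g x = g y) ∧
      r = (∑ x, ∑ y, |g x - g y| ^ p * (hanoiOmega nn x y : ℝ)) /
          (⨅ α : ℝ, ∑ x, |g x - α| ^ p)} := by
    refine ⟨0, ?_⟩
    rintro r ⟨g, -, rfl⟩
    apply div_nonneg
    · exact Finset.sum_nonneg fun x _ => Finset.sum_nonneg fun y _ =>
        mul_nonneg (Real.rpow_nonneg (abs_nonneg _) _) (Nat.cast_nonneg _)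
    · exact Real.iInf_nonneg fun α => Finset.sum_nonneg fun x _ =>
        Real.rpow_nonneg (abs_nonneg _) _
  have hmem : (∑ x, ∑ y, |f x - f y| ^ p * (hanoiOmega nn x y : ℝ)) /
      (⨅ α : ℝ, ∑ x, |f x - α| ^ p) ∈ {r : ℝ | ∃ g : List.Vector (Fin 3) nn → ℝ,
      (¬ ∀ x y, g x = g y) ∧
      r = (∑ x, ∑ y, |g x - g y| ^ p * (hanoiOmega nn x y : ℝ)) /
          (⨅ α : ℝ, ∑ x, |g x - α| ^ p)} := ⟨f, hnc, rfl⟩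
  refine le_trans (csInf_le hbdd hmem) ?_
  -- numerator bound
  have hnum : (∑ x, ∑ y, |f x - f y| ^ p * (hanoiOmega nn x y : ℝ)) ≤ 3 ^ (nn + 1) := by
    have hterm : ∀ x y : List.Vector (Fin 3) nn,
        |f x - f y| ^ p * (hanoiOmega nn x y : ℝ) ≤ (hanoiOmega nn x y : ℝ) := by
      intro x y
      by_cases h0 : hanoiOmega nn x y = 0
      · simp [h0]
      · have hpos : 0 < ([hanoiMove 0 1, hanoiMove 0 2, hanoiMove 1 2].filter
            (fun s => s x.toList = y.toList)).length := Nat.pos_of_ne_zero h0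
        obtain ⟨s, hs⟩ := List.exists_mem_of_length_pos hpos
        rw [List.mem_filter] at hs
        have hsx : s x.toList = y.toList := by
          have := hs.2; simpa using this
        have h1 : |f x - f y| ≤ 1 := hlip x y ⟨s, hs.1, hsx⟩
        calc |f x - f y| ^ p * (hanoiOmega nn x y : ℝ)
            ≤ 1 * (hanoiOmega nn x y : ℝ) := by
              apply mul_le_mul_of_nonneg_right _ (Nat.cast_nonneg _)
              exact Real.rpow_le_one (abs_nonneg _) h1 (le_trans zero_le_one hp)
          _ = (hanoiOmega nn x y : ℝ) := one_mul _
    calc (∑ x, ∑ y, |f x - f y| ^ p * (hanoiOmega nn x y : ℝ))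
        ≤ ∑ x : List.Vector (Fin 3) nn, (3:ℝ) := by
          apply Finset.sum_le_sum
          intro x _
          exact le_trans (Finset.sum_le_sum fun y _ => hterm x y) (sum_omega nn x)
      _ = 3 ^ (nn + 1) := by
          rw [Finset.sum_const, Finset.card_univ, card_vector]
          simp [pow_succ, mul_comm]
  have hden' : D ≤ ⨅ α : ℝ, ∑ x, |f x - α| ^ p := le_ciInf hden
  have hnn : (0:ℝ) ≤ 3 ^ (nn + 1) := by positivity
  exact div_le_div₀ hnn hnum hD hden'

lemma sum_restrict {k nn : ℕ} (ι : List.Vector (Fin 3) k → List.Vector (Fin 3) nn)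
    (hι : Function.Injective ι) (g : List.Vector (Fin 3) nn → ℝ)
    (hg : ∀ x, 0 ≤ g x) (c : ℝ) (hc : ∀ w, c ≤ g (ι w)) :
    (3:ℝ) ^ k * c ≤ ∑ x : List.Vector (Fin 3) nn, g x := by
  classical
  calc (3:ℝ) ^ k * c = ∑ _w : List.Vector (Fin 3) k, c := by
        rw [Finset.sum_const, Finset.card_univ, card_vector]
        simp [nsmul_eq_mul]
    _ ≤ ∑ w : List.Vector (Fin 3) k, g (ι w) := Finset.sum_le_sum fun w _ => hc w
    _ = ∑ x ∈ Finset.univ.image ι, g x :=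
        (Finset.sum_image (fun a _ b _ h => hι h)).symm
    _ ≤ ∑ x : List.Vector (Fin 3) nn, g x :=
        Finset.sum_le_sum_of_subset_of_nonneg (Finset.subset_univ _) (fun x _ _ => hg x)

lemma hden_case2 {p : ℝ} (hp : 1 ≤ p) (m : ℕ) (α : ℝ) :
    (3:ℝ) ^ m * ((2:ℝ) ^ ((m:ℝ) - 1)) ^ p ≤
      ∑ x : List.Vector (Fin 3) (m + 2), |((phi 0 x.toList : ℕ) : ℝ) - α| ^ p := by
  classical
  set c : ℝ := (2:ℝ) ^ ((m:ℝ) - 1) with hcdef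
  have hc : 0 < c := Real.rpow_pos_of_pos (by norm_num) _
  have hp0 : 0 ≤ p := le_trans zero_le_one hp
  have h2c : ((2:ℕ) ^ m : ℝ) = 2 * c := by
    have e1 : 2 * c = (2:ℝ) ^ ((1:ℝ) + ((m:ℝ) - 1)) := by
      rw [Real.rpow_add (by norm_num : (0:ℝ) < 2), Real.rpow_one]
    have e2 : (1:ℝ) + ((m:ℝ) - 1) = (m:ℝ) := by ring
    rw [e1, e2, Real.rpow_natCast]
    push_cast
    ring
  have h4c : ((2:ℕ) ^ (m + 1) : ℝ) = 4 * c := by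
    have : ((2:ℕ) ^ (m+1) : ℝ) = 2 * ((2:ℕ) ^ m : ℝ) := by push_cast; ring
    rw [this, h2c]; ring
  have hg : ∀ x : List.Vector (Fin 3) (m+2), 0 ≤ |((phi 0 x.toList : ℕ) : ℝ) - α| ^ p :=
    fun x => Real.rpow_nonneg (abs_nonneg _) _
  by_cases hα : α ≤ 3 * c
  · -- use vertices ending in 1
    set ι : List.Vector (Fin 3) (m+1) → List.Vector (Fin 3) (m+2) :=
      fun w => ⟨w.toList ++ [1], by simp [w.2]⟩ with hι
    have hinj : Function.Injective ι := by
      intro a b h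
      apply List.Vector.toList_injective
      have h' : a.toList ++ [(1 : Fin 3)] = b.toList ++ [1] := congrArg Subtype.val h
      have := congrArg List.dropLast h'
      simpa [List.dropLast_concat] using this
    have hcw : ∀ w : List.Vector (Fin 3) (m+1),
        c ^ p ≤ |((phi 0 (ι w).toList : ℕ) : ℝ) - α| ^ p := by
      intro w
      have hlist : (ι w).toList = w.toList ++ [1] := rfl
      have hval : 2 ^ (m+1) ≤ phi 0 (w.toList ++ [1]) := by
        rw [phi_append, if_neg (by decide)]
        rw [show w.toList.length = m + 1 from w.2]
        exact Nat.le_add_right _ _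
      have hfr : (4:ℝ) * c ≤ ((phi 0 (ι w).toList : ℕ) : ℝ) := by
        rw [hlist, ← h4c]
        exact_mod_cast hval
      have hdiff : c ≤ |((phi 0 (ι w).toList : ℕ) : ℝ) - α| := by
        have : c ≤ ((phi 0 (ι w).toList : ℕ) : ℝ) - α := by linarith
        exact le_trans this (le_abs_self _)
      exact Real.rpow_le_rpow hc.le hdiff hp0
    calc (3:ℝ) ^ m * c ^ p ≤ (3:ℝ) ^ (m+1) * c ^ p := by
          apply mul_le_mul_of_nonneg_right _ (Real.rpow_nonneg hc.le _)
          exact pow_le_pow_right₀ (by norm_num) (Nat.le_succ m)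
      _ ≤ _ := sum_restrict ι hinj _ hg (c ^ p) hcw
  · -- use vertices ending in 0, 0
    push_neg at hα
    set ι : List.Vector (Fin 3) m → List.Vector (Fin 3) (m+2) :=
      fun w => ⟨w.toList ++ [0, 0], by simp [w.2]⟩ with hι
    have hinj : Function.Injective ι := by
      intro a b h
      apply List.Vector.toList_injective
      have h' : a.toList ++ [(0 : Fin 3), 0] = b.toList ++ [0, 0] := congrArg Subtype.val h
      have h'' := congrArg List.dropLast (congrArg List.dropLast
        (by simpa [← List.append_assoc] using h' :
          (a.toList ++ [(0:Fin 3)]) ++ [0] = (b.toList ++ [0]) ++ [0]))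
      simpa [List.dropLast_concat] using h''
    have hcw : ∀ w : List.Vector (Fin 3) m,
        c ^ p ≤ |((phi 0 (ι w).toList : ℕ) : ℝ) - α| ^ p := by
      intro w
      have hlist : (ι w).toList = (w.toList ++ [0]) ++ [0] := by
        show w.toList ++ [0, 0] = _
        simp
      have hval : phi 0 (ι w).toList ≤ 2 ^ m := by
        rw [hlist, phi_append, if_pos rfl, phi_append, if_pos rfl]
        have hthis := phi_lt 0 w.toList
        have hlen : w.toList.length = m := w.2
        rw [hlen] at hthis
        omega
      have hfr : ((phi 0 (ι w).toList : ℕ) : ℝ) ≤ 2 * c := by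
        rw [← h2c]
        exact_mod_cast hval
      have hdiff : c ≤ |((phi 0 (ι w).toList : ℕ) : ℝ) - α| := by
        rw [abs_sub_comm]
        have : c ≤ α - ((phi 0 (ι w).toList : ℕ) : ℝ) := by linarith
        exact le_trans this (le_abs_self _)
      exact Real.rpow_le_rpow hc.le hdiff hp0
    exact sum_restrict ι hinj _ hg (c ^ p) hcw

lemma nat_abs_le {a b : ℕ} (h1 : a ≤ b + 1) (h2 : b ≤ a + 1) : |(a:ℝ) - (b:ℝ)| ≤ 1 := by
  rw [abs_le]
  constructor
  · have : (b:ℝ) ≤ (a:ℝ) + 1 := by exact_mod_cast h2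
    linarith
  · have : (a:ℝ) ≤ (b:ℝ) + 1 := by exact_mod_cast h1
    linarith

lemma f_lip (nn : ℕ) (x y : List.Vector (Fin 3) nn)
    (h : ∃ s ∈ [hanoiMove 0 1, hanoiMove 0 2, hanoiMove 1 2], s x.toList = y.toList) :
    |((phi 0 x.toList : ℕ) : ℝ) - ((phi 0 y.toList : ℕ) : ℝ)| ≤ 1 := by
  obtain ⟨s, hs, hsx⟩ := h
  rw [← hsx]
  simp only [List.mem_cons, List.mem_singleton, List.not_mem_nil, or_false] at hs
  rcases hs with rfl | rfl | rfl
  · have := lip 0 1 (by decide) x.toList 0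
    rw [abs_sub_comm]
    exact nat_abs_le this.1 this.2
  · have := lip 0 2 (by decide) x.toList 0
    rw [abs_sub_comm]
    exact nat_abs_le this.1 this.2
  · have := lip 1 2 (by decide) x.toList 0
    rw [abs_sub_comm]
    exact nat_abs_le this.1 this.2

lemma f_nonconst (nn : ℕ) (hnn : 1 ≤ nn) :
    ¬ ∀ x y : List.Vector (Fin 3) nn,
      ((phi 0 x.toList : ℕ) : ℝ) = ((phi 0 y.toList : ℕ) : ℝ) := by
  intro h
  have h01 := h ⟨List.replicate nn 0, by simp⟩ ⟨List.replicate nn 1, by simp⟩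
  have e0 : phi 0 (List.replicate nn (0 : Fin 3)) = 0 := by
    rw [phi_const 0 0 _ (fun y hy => List.eq_of_mem_replicate hy)]
    simp
  have e1 : phi 0 (List.replicate nn (1 : Fin 3)) = 2 ^ nn - 1 := by
    rw [phi_const 1 0 _ (fun y hy => List.eq_of_mem_replicate hy)]
    simp [List.length_replicate]
  have hlt : (1:ℕ) ≤ 2 ^ nn - 1 := by
    have : (2:ℕ) ≤ 2 ^ nn := by
      calc (2:ℕ) = 2 ^ 1 := rfl
        _ ≤ 2 ^ nn := Nat.pow_le_pow_right (by norm_num) hnn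
    omega
  simp only [List.Vector.toList_mk, e0, e1] at h01
  have : (2 ^ nn - 1 : ℕ) = 0 := by exact_mod_cast h01.symm
  omega

lemma hden_case1 {p : ℝ} (hp : 1 ≤ p) (α : ℝ) :
    ((2:ℝ)⁻¹) ^ p ≤ ∑ x : List.Vector (Fin 3) 1, |((phi 0 x.toList : ℕ) : ℝ) - α| ^ p := by
  classical
  have hp0 : 0 ≤ p := le_trans zero_le_one hp
  have hg : ∀ x : List.Vector (Fin 3) 1, 0 ≤ |((phi 0 x.toList : ℕ) : ℝ) - α| ^ p :=
    fun x => Real.rpow_nonneg (abs_nonneg _) _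
  by_cases hα : α ≤ 1/2
  · set v : List.Vector (Fin 3) 1 := ⟨[1], rfl⟩ with hv
    have hval : phi 0 v.toList = 1 := by decide
    have hdiff : (2:ℝ)⁻¹ ≤ |((phi 0 v.toList : ℕ) : ℝ) - α| := by
      rw [hval]
      have : (2:ℝ)⁻¹ ≤ 1 - α := by norm_num; linarith
      exact le_trans this (by push_cast; exact le_abs_self _)
    calc ((2:ℝ)⁻¹) ^ p ≤ |((phi 0 v.toList : ℕ) : ℝ) - α| ^ p :=
          Real.rpow_le_rpow (by norm_num) hdiff hp0
      _ ≤ _ := Finset.single_le_sum (fun x _ => hg x) (Finset.mem_univ v)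
  · push_neg at hα
    set v : List.Vector (Fin 3) 1 := ⟨[0], rfl⟩ with hv
    have hval : phi 0 v.toList = 0 := by decide
    have hdiff : (2:ℝ)⁻¹ ≤ |((phi 0 v.toList : ℕ) : ℝ) - α| := by
      rw [hval]
      rw [abs_sub_comm]
      have : (2:ℝ)⁻¹ ≤ α - 0 := by norm_num; linarith
      exact le_trans this (by push_cast; exact le_abs_self _)
    calc ((2:ℝ)⁻¹) ^ p ≤ |((phi 0 v.toList : ℕ) : ℝ) - α| ^ p :=
          Real.rpow_le_rpow (by norm_num) hdiff hp0
      _ ≤ _ := Finset.single_le_sum (fun x _ => hg x) (Finset.mem_univ v)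

lemma rpow8 {p : ℝ} : (8:ℝ) ^ p = (2:ℝ) ^ (3 * p) := by
  have h8 : (8:ℝ) = (2:ℝ) ^ (3:ℝ) := by
    rw [show ((3:ℝ) = ((3:ℕ):ℝ)) by norm_num, Real.rpow_natCast]
    norm_num
  rw [h8, ← Real.rpow_mul (by norm_num)]


/-- Theorem 13: for each `1 ≤ p < ∞` there is `C > 0` such that the
`p`-spectral gap of the Hanoi Schreier graphs satisfies `λ₁^{(p)}(Γ_n) ≤ C·2^{−np}`. -/
theorem statement_17 (p : ℝ) (hp : 1 ≤ p) :
    ∃ C : ℝ, 0 < C ∧ ∀ n : ℕ, 1 ≤ n →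
      lambdaOne (hanoiOmega n) p ≤ C * 2 ^ (-(n : ℝ) * p) := by
  have hp0 : 0 ≤ p := le_trans zero_le_one hp
  refine ⟨27 * (8:ℝ) ^ p, by positivity, ?_⟩
  intro n hn
  match n, hn with
  | 1, _ =>
    set D : ℝ := ((2:ℝ)⁻¹) ^ p with hD
    have hDpos : 0 < D := Real.rpow_pos_of_pos (by norm_num) _
    have h := main_bound hp 1 (fun x => ((phi 0 x.toList : ℕ) : ℝ))
      (f_nonconst 1 le_rfl) (fun x y hxy => f_lip 1 x y hxy) D hDpos
      (fun α => hden_case1 hp α)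
    refine le_trans h ?_
    have hDval : D = ((2:ℝ) ^ p)⁻¹ := by
      rw [hD, ← Real.rpow_neg_one (2:ℝ), ← Real.rpow_mul (by norm_num),
        ← Real.rpow_neg (by norm_num)]
      ring_nf
    rw [hDval]
    rw [show (3:ℝ) ^ (1 + 1) / ((2:ℝ) ^ p)⁻¹ = 9 * (2:ℝ) ^ p by
      rw [div_eq_mul_inv, inv_inv]; norm_num]
    have e1 : (27:ℝ) * (8:ℝ) ^ p * 2 ^ (-(1:ℝ) * p) = 27 * (2:ℝ) ^ (2 * p) := by
      rw [rpow8, mul_assoc, ← Real.rpow_add (by norm_num)]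
      ring_nf
    push_cast
    rw [e1]
    have h2 : (2:ℝ) ^ p ≤ (2:ℝ) ^ (2 * p) :=
      Real.rpow_le_rpow_of_exponent_le (by norm_num) (by linarith)
    nlinarith [Real.rpow_pos_of_pos (show (0:ℝ) < 2 by norm_num) p]
  | (m + 2), _ =>
    set c : ℝ := (2:ℝ) ^ ((m:ℝ) - 1) with hcdef
    have hc : 0 < c := Real.rpow_pos_of_pos (by norm_num) _
    set D : ℝ := (3:ℝ) ^ m * c ^ p with hD
    have hDpos : 0 < D := by positivity
    have h := main_bound hp (m + 2) (fun x => ((phi 0 x.toList : ℕ) : ℝ))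
      (f_nonconst (m + 2) (by omega)) (fun x y hxy => f_lip (m + 2) x y hxy) D hDpos
      (fun α => hden_case2 hp m α)
    refine le_trans h ?_
    have hcp : c ^ p = (2:ℝ) ^ (((m:ℝ) - 1) * p) := by
      rw [hcdef, ← Real.rpow_mul (by norm_num)]
    have lhs_eq : (3:ℝ) ^ (m + 2 + 1) / D = 27 / c ^ p := by
      rw [hD, show m + 2 + 1 = m + 3 from rfl, pow_add]
      rw [mul_div_mul_left _ _ (by positivity : ((3:ℝ) ^ m) ≠ 0)]
      norm_num
    rw [lhs_eq]
    have rhs_eq : (27:ℝ) * (8:ℝ) ^ p * 2 ^ (-((m:ℝ) + 2) * p) = 27 / c ^ p := by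
      rw [rpow8, mul_assoc, ← Real.rpow_add (by norm_num), hcp]
      rw [div_eq_mul_inv, ← Real.rpow_neg (by norm_num)]
      congr 1
      ring
    push_cast
    rw [rhs_eq]
end
end
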